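/- arXiv:2310.03467 — 2 statements merged into one kernel-verified Lean document; each statement's English description precedes it below -/
import Mathlib

section
/- Let L>0, ω>0 and α>0. Let Φ : ℝ → ℂ be an even, twice continuously differentiable, L-periodic function, not identically zero, satisfying −Φ'' + ωΦ = |Φ|^α Φ on ℝ. Then there exist θ₀ ∈ ℝ and an even, real-valued, L-periodic, twice continuously differentiable function φ : ℝ → ℝ such that Φ(x) = e^{iθ₀} φ(x) for all x ∈ ℝ, and φ satisfies −φ'' + ωφ = |φ|^α φ on ℝ. -/
noncomputable section

open Set

private lemma aux_ode_zero {q : ℝ → ℝ} {M : ℝ} (hM : ∀ x, |q x| ≤ M)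
    {f : ℝ → ℝ} (hf : Differentiable ℝ f) (hf' : Differentiable ℝ (deriv f))
    (hode : ∀ x, deriv (deriv f) x = q x * f x)
    (h0 : f 0 = 0) (h0' : deriv f 0 = 0) (x : ℝ) : f x = 0 := by
  have hM0 : (0:ℝ) ≤ M := (abs_nonneg _).trans (hM 0)
  have hK1 : (1:ℝ) ≤ max 1 M := le_max_left _ _
  set K : NNReal := ⟨max 1 M, zero_le_one.trans hK1⟩ with hKdef
  have hlip : ∀ t, LipschitzOnWith K (fun y : ℝ × ℝ => (y.2, q t * y.1)) Set.univ := by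
    intro t
    apply (LipschitzWith.of_dist_le_mul ?_).lipschitzOnWith
    intro a b
    have hco : (K : ℝ) = max 1 M := rfl
    rw [hco]
    have hpd : dist ((a.2, q t * a.1) : ℝ × ℝ) ((b.2, q t * b.1)) =
        max (dist a.2 b.2) (dist (q t * a.1) (q t * b.1)) := by
      simp [Prod.dist_eq]
    rw [hpd]
    apply max_le
    · have hsnd : dist a.2 b.2 ≤ dist a b := by
        rw [Prod.dist_eq]; exact le_max_right _ _
      calc dist a.2 b.2 ≤ dist a b := hsnd
        _ ≤ max 1 M * dist a b := le_mul_of_one_le_left dist_nonneg hK1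
    · have h1 : dist (q t * a.1) (q t * b.1) = |q t| * dist a.1 b.1 := by
        rw [Real.dist_eq, Real.dist_eq, ← mul_sub, abs_mul]
      rw [h1]
      have hfst : dist a.1 b.1 ≤ dist a b := by
        rw [Prod.dist_eq]; exact le_max_left _ _
      calc |q t| * dist a.1 b.1 ≤ M * dist a b :=
            mul_le_mul (hM t) hfst dist_nonneg hM0
        _ ≤ max 1 M * dist a b := mul_le_mul_of_nonneg_right (le_max_right _ _) dist_nonneg
  have hF : ∀ t, HasDerivAt (fun s => (f s, deriv f s))
      ((fun y : ℝ × ℝ => (y.2, q t * y.1)) (f t, deriv f t)) t := by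
    intro t
    have h2 := (hf' t).hasDerivAt
    rw [hode t] at h2
    exact ((hf t).hasDerivAt).prodMk h2
  have hG : ∀ t, HasDerivAt (fun _ : ℝ => ((0:ℝ), (0:ℝ)))
      ((fun y : ℝ × ℝ => (y.2, q t * y.1)) (0, 0)) t := by
    intro t
    show HasDerivAt _ ((0:ℝ), q t * 0) t
    rw [mul_zero, Prod.mk_zero_zero]
    exact hasDerivAt_const t _
  have key := ODE_solution_unique_of_mem_Ioo
    (v := fun t (y : ℝ × ℝ) => (y.2, q t * y.1)) (s := fun _ => Set.univ) (fun t _ => hlip t)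
    (t₀ := 0) (a := -(|x| + 1)) (b := |x| + 1)
    ⟨by nlinarith [abs_nonneg x], by nlinarith [abs_nonneg x]⟩
    (fun t _ => ⟨hF t, trivial⟩) (fun t _ => ⟨hG t, trivial⟩)
    (by simp [h0, h0'])
  have hx : x ∈ Set.Ioo (-(|x| + 1)) (|x| + 1) :=
    ⟨by nlinarith [neg_abs_le x], by nlinarith [le_abs_self x]⟩
  exact congrArg Prod.fst (key hx)

theorem even_solution_is_rotation_of_real (L ω α : ℝ) (hL : 0 < L) (hω : 0 < ω) (hα : 0 < α)
    (Φ : ℝ → ℂ) (heven : ∀ x : ℝ, Φ (-x) = Φ x) (hC2 : ContDiff ℝ 2 Φ)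
    (hper : Function.Periodic Φ L) (hne : ¬ ∀ x : ℝ, Φ x = 0)
    (heq : ∀ x : ℝ, -(deriv (deriv Φ) x) + (ω : ℂ) * Φ x = ((‖Φ x‖ ^ α : ℝ) : ℂ) * Φ x) :
    ∃ θ₀ : ℝ, ∃ φ : ℝ → ℝ,
      (∀ x : ℝ, φ (-x) = φ x) ∧ Function.Periodic φ L ∧ ContDiff ℝ 2 φ ∧
      (∀ x : ℝ, Φ x = Complex.exp (θ₀ * Complex.I) * (φ x : ℂ)) ∧
      ∀ x : ℝ, -(deriv (deriv φ) x) + ω * φ x = |φ x| ^ α * φ x := by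
  classical
  set θ₀ : ℝ := (Φ 0).arg with hθ₀
  set c : ℂ := Complex.exp (-(θ₀ : ℂ) * Complex.I) with hc
  set Ψ : ℝ → ℂ := fun x => c * Φ x with hΨ
  set q : ℝ → ℝ := fun x => ω - ‖Φ x‖ ^ α with hq
  -- basic regularity
  have hΦdiff : Differentiable ℝ Φ := hC2.differentiable (by norm_num)
  have hC2' : ContDiff ℝ (1 + 1 : WithTop ℕ∞) Φ := by
    rw [show ((1 : WithTop ℕ∞) + 1) = 2 by norm_num]; exact hC2
  have hΦ'C1 : ContDiff ℝ 1 (deriv Φ) := (contDiff_succ_iff_deriv.mp hC2').2.2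
  have hΦ'diff : Differentiable ℝ (deriv Φ) := hΦ'C1.differentiable one_ne_zero
  have hΨC2 : ContDiff ℝ 2 Ψ := contDiff_const.mul hC2
  have hΨdiff : Differentiable ℝ Ψ := hΨC2.differentiable (by norm_num)
  have hΨ'eq : deriv Ψ = fun x => c * deriv Φ x := by
    funext x; exact deriv_const_mul_field c
  have hΨ'diff : Differentiable ℝ (deriv Ψ) := by
    rw [hΨ'eq]; exact hΦ'diff.const_mul c
  have hΨ''eq : ∀ x, deriv (deriv Ψ) x = c * deriv (deriv Φ) x := by
    intro x; rw [hΨ'eq]; exact deriv_const_mul_field c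
  -- exp facts
  have hcc : Complex.exp ((θ₀ : ℂ) * Complex.I) * c = 1 := by
    rw [hc, ← Complex.exp_add,
      show ((θ₀ : ℂ) * Complex.I + -(θ₀ : ℂ) * Complex.I) = 0 by ring, Complex.exp_zero]
  have hcnorm : ‖c‖ = 1 := by
    rw [hc, show (-(θ₀ : ℂ)) = ((-θ₀ : ℝ) : ℂ) by push_cast; ring]
    simpa using Complex.norm_exp_ofReal_mul_I (-θ₀)
  -- derivative of Φ at 0 vanishes (evenness)
  have hΦ'0 : deriv Φ 0 = 0 := by
    have hd : HasDerivAt Φ (deriv Φ 0) 0 := (hΦdiff 0).hasDerivAt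
    have hdneg : HasDerivAt Φ (deriv Φ 0) (-(0 : ℝ)) := by simpa using hd
    have h2 : HasDerivAt (fun x : ℝ => Φ (-x)) ((-1 : ℝ) • deriv Φ 0) 0 :=
      hdneg.scomp 0 (hasDerivAt_neg (0 : ℝ))
    rw [funext heven] at h2
    have h3 := hd.unique h2
    have h4 : deriv Φ 0 = -(deriv Φ 0) := by
      simpa using h3
    linear_combination h4 / 2
  -- the second-order equation rewritten
  have hΦ'' : ∀ x, deriv (deriv Φ) x = ((q x : ℝ) : ℂ) * Φ x := by
    intro x
    have h := heq x
    rw [hq]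
    push_cast
    linear_combination -h
  have hΨ'' : ∀ x, deriv (deriv Ψ) x = ((q x : ℝ) : ℂ) * Ψ x := by
    intro x
    rw [hΨ''eq x, hΦ'' x, hΨ]
    ring
  -- q is continuous, periodic, bounded
  have hqcont : Continuous q := by
    apply continuous_const.sub
    exact (hC2.continuous.norm).rpow_const (fun x => Or.inr hα.le)
  have hqper : Function.Periodic q L := by
    intro x; simp only [hq]; rw [hper x]
  obtain ⟨C, hC⟩ := (isCompact_Icc (a := (0:ℝ)) (b := L)).exists_bound_of_continuousOn
    hqcont.continuousOn
  have hqbd : ∀ x, |q x| ≤ C := by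
    intro x
    obtain ⟨y, hy, hxy⟩ := hqper.exists_mem_Ico₀ hL x
    rw [hxy, ← Real.norm_eq_abs]
    exact hC y (Ico_subset_Icc_self hy)
  -- imaginary part of Ψ
  set v : ℝ → ℝ := fun x => (Ψ x).im with hvdef
  have hvC2 : ContDiff ℝ 2 v := Complex.imCLM.contDiff.comp hΨC2
  have hvderiv : ∀ x, deriv v x = (deriv Ψ x).im := by
    intro x
    exact (Complex.imCLM.hasFDerivAt.comp_hasDerivAt x (hΨdiff x).hasDerivAt).deriv
  have hvdiff : Differentiable ℝ v := hvC2.differentiable (by norm_num)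
  have hvderiv2 : ∀ x, deriv (deriv v) x = (deriv (deriv Ψ) x).im := by
    intro x
    rw [show deriv v = fun y => (deriv Ψ y).im from funext hvderiv]
    exact (Complex.imCLM.hasFDerivAt.comp_hasDerivAt x (hΨ'diff x).hasDerivAt).deriv
  have hv'diff : Differentiable ℝ (deriv v) := by
    rw [show deriv v = fun y => (deriv Ψ y).im from funext hvderiv]
    exact Complex.imCLM.differentiable.comp hΨ'diff
  have hvode : ∀ x, deriv (deriv v) x = q x * v x := by
    intro x
    rw [hvderiv2 x, hΨ'' x]
    simp [Complex.mul_im]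
    exact Or.inl rfl
  have hv0 : v 0 = 0 := by
    have h1 : Ψ 0 = ((‖Φ 0‖ : ℝ) : ℂ) := by
      calc Ψ 0 = c * Φ 0 := rfl
        _ = c * (((‖Φ 0‖ : ℝ) : ℂ) * Complex.exp ((θ₀ : ℂ) * Complex.I)) := by
            rw [hθ₀]; rw [Complex.norm_mul_exp_arg_mul_I]
        _ = ((‖Φ 0‖ : ℝ) : ℂ) * (Complex.exp ((θ₀ : ℂ) * Complex.I) * c) := by ring
        _ = _ := by rw [hcc, mul_one]
    rw [hvdef]; simp only [h1, Complex.ofReal_im]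
  have hv'0 : deriv v 0 = 0 := by
    rw [hvderiv 0, hΨ'eq]
    simp [hΦ'0]
  have hvzero : ∀ x, v x = 0 := fun x => aux_ode_zero hqbd hvdiff hv'diff hvode hv0 hv'0 x
  -- the real part
  set φ : ℝ → ℝ := fun x => (Ψ x).re with hφdef
  have hΨreal : ∀ x, Ψ x = ((φ x : ℝ) : ℂ) := by
    intro x
    exact Complex.ext rfl (by simpa using hvzero x)
  have hφC2 : ContDiff ℝ 2 φ := Complex.reCLM.contDiff.comp hΨC2
  have hφderiv2 : ∀ x, deriv (deriv φ) x = q x * φ x := by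
    intro x
    have h1 : ∀ y, deriv φ y = (deriv Ψ y).re := fun y =>
      (Complex.reCLM.hasFDerivAt.comp_hasDerivAt y (hΨdiff y).hasDerivAt).deriv
    have h2 : deriv (deriv φ) x = (deriv (deriv Ψ) x).re := by
      rw [show deriv φ = fun y => (deriv Ψ y).re from funext h1]
      exact (Complex.reCLM.hasFDerivAt.comp_hasDerivAt x (hΨ'diff x).hasDerivAt).deriv
    rw [h2, hΨ'' x, hΨreal x]
    simp [Complex.mul_re]
  have hnormΦ : ∀ x, ‖Φ x‖ = |φ x| := by
    intro x
    have h1 : ‖Ψ x‖ = ‖Φ x‖ := by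
      rw [hΨ]; simp only [norm_mul, hcnorm, one_mul]
    rw [← h1, hΨreal x, Complex.norm_real, Real.norm_eq_abs]
  refine ⟨θ₀, φ, ?_, ?_, hφC2, ?_, ?_⟩
  · intro x
    simp only [hφdef, hΨ]
    rw [heven x]
  · intro x
    simp only [hφdef, hΨ]
    rw [hper x]
  · intro x
    have : Complex.exp ((θ₀ : ℂ) * Complex.I) * ((φ x : ℝ) : ℂ)
        = Complex.exp ((θ₀ : ℂ) * Complex.I) * (c * Φ x) := by rw [← hΨreal x]
    rw [this, ← mul_assoc, hcc, one_mul]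
  · intro x
    have h := hφderiv2 x
    rw [h, hq]
    have h2 := hnormΦ x
    rw [show (fun x => ω - ‖Φ x‖ ^ α) x = ω - ‖Φ x‖ ^ α from rfl, h2]
    ring
end
end

section
/- Let L>0, ω>0 and α>0, and let φ : ℝ → ℝ be a twice continuously differentiable L-periodic function with φ(x) > 0 for all x, satisfying −φ'' + ωφ = φ^{α+1} on ℝ. Then for every continuously differentiable L-periodic function ψ : ℝ → ℝ one has ∫₀ᴸ ( ψ'(x)² + ω ψ(x)² − φ(x)^α ψ(x)² ) dx ≥ 0, with equality if and only if ψ is a scalar multiple of φ. In other words, the operator L₂ = −∂ₓ² + ω − φ^α is nonnegative and its kernel among periodic functions is spanned by φ. -/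
open intervalIntegral

noncomputable section

private lemma periodic_deriv_aux {L : ℝ} {f : ℝ → ℝ} (hf : Function.Periodic f L) :
    Function.Periodic (deriv f) L := by
  intro x
  have h : (fun y => f (y + L)) = f := funext fun y => hf y
  calc deriv f (x + L) = deriv (fun y => f (y + L)) x := (deriv_comp_add_const _ _ _).symm
    _ = deriv f x := by rw [h]

theorem L2_nonnegative_kernel_phi (L ω α : ℝ) (hL : 0 < L) (hω : 0 < ω) (hα : 0 < α)
    (φ : ℝ → ℝ) (hC2 : ContDiff ℝ 2 φ) (hper : Function.Periodic φ L)
    (hpos : ∀ x : ℝ, 0 < φ x)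
    (heq : ∀ x : ℝ, -(deriv (deriv φ) x) + ω * φ x = φ x ^ (α + 1)) :
    ∀ ψ : ℝ → ℝ, ContDiff ℝ 1 ψ → Function.Periodic ψ L →
      (0 ≤ ∫ x in (0:ℝ)..L, (deriv ψ x ^ 2 + ω * ψ x ^ 2 - φ x ^ α * ψ x ^ 2)) ∧
      ((∫ x in (0:ℝ)..L, (deriv ψ x ^ 2 + ω * ψ x ^ 2 - φ x ^ α * ψ x ^ 2)) = 0 ↔
        ∃ c : ℝ, ∀ x : ℝ, ψ x = c * φ x) := by
  intro ψ hC1 hψper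
  -- basic regularity facts
  have hφd : Differentiable ℝ φ := hC2.differentiable (by norm_num)
  have h2 : ContDiff ℝ (1 + 1) φ := by norm_num [hC2]
  have hφ'C1 : ContDiff ℝ 1 (deriv φ) := (contDiff_succ_iff_deriv.mp h2).2.2
  have hφ'd : Differentiable ℝ (deriv φ) := (contDiff_one_iff_deriv.mp hφ'C1).1
  have hφ''c : Continuous (deriv (deriv φ)) := (contDiff_one_iff_deriv.mp hφ'C1).2
  have hφ'c : Continuous (deriv φ) := hφ'C1.continuous
  have hφc : Continuous φ := hC2.continuous
  have hψd : Differentiable ℝ ψ := (contDiff_one_iff_deriv.mp hC1).1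
  have hψ'c : Continuous (deriv ψ) := (contDiff_one_iff_deriv.mp hC1).2
  have hψc : Continuous ψ := hC1.continuous
  have hφne : ∀ x, φ x ≠ 0 := fun x => (hpos x).ne'
  -- the quotient u = ψ/φ and its derivative D
  set D : ℝ → ℝ := fun x => (deriv ψ x * φ x - ψ x * deriv φ x) / φ x ^ 2 with hD
  have hu : ∀ x, HasDerivAt (fun y => ψ y / φ y) (D x) x := fun x =>
    (hψd x).hasDerivAt.div (hφd x).hasDerivAt (hφne x)
  have hDc : Continuous D := by
    apply Continuous.div
    · exact (hψ'c.mul hφc).sub (hψc.mul hφ'c)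
    · exact hφc.pow 2
    · exact fun x => pow_ne_zero 2 (hφne x)
  -- the boundary function g = φ' ψ² / φ and its derivative G
  set G : ℝ → ℝ := fun x =>
    ((deriv (deriv φ) x * ψ x ^ 2 + deriv φ x * (2 * ψ x * deriv ψ x)) * φ x
      - deriv φ x * ψ x ^ 2 * deriv φ x) / φ x ^ 2 with hG
  have hg : ∀ x, HasDerivAt (fun y => deriv φ y * ψ y ^ 2 / φ y) (G x) x := by
    intro x
    have h1 : HasDerivAt (fun y => ψ y ^ 2) (2 * ψ x * deriv ψ x) x := by
      have := ((hψd x).hasDerivAt.fun_pow 2)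
      simpa [mul_comm, mul_assoc, mul_left_comm] using this
    have h2 : HasDerivAt (fun y => deriv φ y * ψ y ^ 2)
        (deriv (deriv φ) x * ψ x ^ 2 + deriv φ x * (2 * ψ x * deriv ψ x)) x :=
      (hφ'd x).hasDerivAt.mul h1
    exact h2.div (hφd x).hasDerivAt (hφne x)
  have hGc : Continuous G := by
    apply Continuous.div
    · exact (((hφ''c.mul (hψc.pow 2)).add
        (hφ'c.mul ((continuous_const.mul hψc).mul hψ'c))).mul hφc).sub
        ((hφ'c.mul (hψc.pow 2)).mul hφ'c)
    · exact hφc.pow 2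
    · exact fun x => pow_ne_zero 2 (hφne x)
  -- pointwise identity
  have hident : ∀ x, deriv ψ x ^ 2 + ω * ψ x ^ 2 - φ x ^ α * ψ x ^ 2
      = (φ x * D x) ^ 2 + G x := by
    intro x
    have hA : φ x ^ α * φ x = ω * φ x - deriv (deriv φ) x := by
      rw [← Real.rpow_add_one (hφne x) α, ← heq x]; ring
    have hA' : φ x ^ α = (ω * φ x - deriv (deriv φ) x) / φ x := by
      rw [eq_div_iff (hφne x), hA]
    rw [hA', hD, hG]
    field_simp [hφne x]
    ring
  -- continuity of the whole integrand
  have hintc : Continuous (fun x => deriv ψ x ^ 2 + ω * ψ x ^ 2 - φ x ^ α * ψ x ^ 2) := by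
    have : Continuous (fun x => φ x ^ α) := hφc.rpow_const fun x => Or.inl (hφne x)
    exact ((hψ'c.pow 2).add (continuous_const.mul (hψc.pow 2))).sub (this.mul (hψc.pow 2))
  -- integral of G over the period vanishes
  have hGint : (∫ x in (0:ℝ)..L, G x) = 0 := by
    rw [integral_eq_sub_of_hasDerivAt (fun x _ => hg x)
      (hGc.intervalIntegrable 0 L)]
    have : deriv φ L * ψ L ^ 2 / φ L = deriv φ 0 * ψ 0 ^ 2 / φ 0 := by
      have e1 : deriv φ L = deriv φ 0 := by
        simpa using (periodic_deriv_aux hper) 0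
      have e2 : ψ L = ψ 0 := by simpa using hψper 0
      have e3 : φ L = φ 0 := by simpa using hper 0
      rw [e1, e2, e3]
    rw [this, sub_self]
  -- key reduction
  have key : (∫ x in (0:ℝ)..L, (deriv ψ x ^ 2 + ω * ψ x ^ 2 - φ x ^ α * ψ x ^ 2))
      = ∫ x in (0:ℝ)..L, (φ x * D x) ^ 2 := by
    rw [integral_congr (fun x _ => hident x), integral_add (f := fun x => (φ x * D x) ^ 2)
      (((hφc.mul hDc).pow 2).intervalIntegrable 0 L) (hGc.intervalIntegrable 0 L),
      hGint, add_zero]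
  constructor
  · rw [key]
    exact integral_nonneg hL.le fun x _ => sq_nonneg _
  constructor
  · -- equality implies ψ = c φ
    intro h0
    rw [key] at h0
    have hae := (integral_eq_zero_iff_of_le_of_nonneg_ae hL.le
      (Filter.Eventually.of_forall fun x => sq_nonneg (φ x * D x))
      (((hφc.mul hDc).pow 2).intervalIntegrable 0 L)).mp h0
    have heqon : Set.EqOn (fun x => (φ x * D x) ^ 2) 0 (Set.Ioc 0 L) :=
      MeasureTheory.Measure.eqOn_Ioc_of_ae_eq MeasureTheory.volume hae
        (((hφc.mul hDc).pow 2).continuousOn) continuousOn_const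
    have hD0' : ∀ x ∈ Set.Ioc (0:ℝ) L, D x = 0 := by
      intro x hx
      have h2 : (φ x * D x) ^ 2 = 0 := heqon hx
      have h3 : φ x * D x = 0 := by
        exact sq_eq_zero_iff.mp h2
      rcases mul_eq_zero.mp h3 with h | h
      · exact absurd h (hφne x)
      · exact h
    have hDper : Function.Periodic D L := by
      intro x
      simp only [hD, (periodic_deriv_aux hψper) x, (periodic_deriv_aux hper) x,
        hψper x, hper x]
    have hD0 : ∀ x, D x = 0 := by
      intro x
      have hmem := toIocMod_mem_Ioc hL 0 x
      rw [zero_add] at hmem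
      have : D (toIocMod hL 0 x) = D x := by
        rw [← self_sub_toIocDiv_zsmul hL 0 x]
        exact hDper.sub_zsmul_eq _
      rw [← this]
      exact hD0' _ hmem
    have hud : Differentiable ℝ (fun y => ψ y / φ y) := fun x => (hu x).differentiableAt
    have hconst : ∀ x, ψ x / φ x = ψ 0 / φ 0 := by
      intro x
      exact is_const_of_deriv_eq_zero hud (fun x => by rw [(hu x).deriv]; exact hD0 x) x 0
    refine ⟨ψ 0 / φ 0, fun x => ?_⟩
    rw [← hconst x, div_mul_cancel₀ _ (hφne x)]
  · -- ψ = c φ implies equality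
    rintro ⟨c, hc⟩
    rw [key]
    have hψeq : ψ = fun x => c * φ x := funext hc
    have hD0 : ∀ x, D x = 0 := by
      intro x
      have hdψ : deriv ψ x = c * deriv φ x := by
        rw [hψeq, deriv_const_mul c (hφd x)]
      simp only [hD, hdψ, hc x]
      rw [div_eq_zero_iff]
      left; ring
    have hzz : (∫ x in (0:ℝ)..L, (φ x * D x) ^ 2) = ∫ _x in (0:ℝ)..L, (0:ℝ) :=
      integral_congr fun x _ => by rw [hD0 x]; ring
    rw [hzz]
    simp
end
end
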